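/- Let T ≥ 1 be an integer and let J be a finite set of jobs, where each job j has an integer processing length p_j with 1 ≤ p_j ≤ T and a size s_j ∈ (0,1]. Then one can choose for each job j a set T_j ⊆ {1,…,T} of exactly p_j time slots such that the resulting loads are balanced to within one unit: for any two time slots t, t' ∈ {1,…,T}, |Σ_{j : t ∈ T_j} s_j − Σ_{j : t' ∈ T_j} s_j| ≤ 1. -/

import Mathlib

open Finset

/-- Jobs sharing the common time window `{1,…,T}` can be scheduled (job `j` getting
exactly `p j` slots) so that the loads of any two time slots differ by at most one. -/
theorem stmt_15 {ι : Type*} [Fintype ι]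
    (T : ℕ) (hT : 1 ≤ T)
    (p : ι → ℕ) (s : ι → ℝ)
    (hp1 : ∀ j, 1 ≤ p j) (hpT : ∀ j, p j ≤ T)
    (hs0 : ∀ j, 0 < s j) (hs1 : ∀ j, s j ≤ 1) :
    ∃ Tj : ι → Finset ℕ,
      (∀ j, Tj j ⊆ Finset.Icc 1 T ∧ (Tj j).card = p j) ∧
      ∀ t ∈ Finset.Icc 1 T, ∀ t' ∈ Finset.Icc 1 T,
        |(∑ j ∈ Finset.univ.filter (fun j : ι => t ∈ Tj j), s j) -
          (∑ j ∈ Finset.univ.filter (fun j : ι => t' ∈ Tj j), s j)| ≤ 1 := by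
  classical
  set S : Finset ℕ := Finset.Icc 1 T with hS
  have hcardS : S.card = T := by simp [hS]
  -- the finite set of all valid assignments
  let cand : Finset (ι → Finset ℕ) :=
    Fintype.piFinset (fun j => S.powerset.filter (fun A => A.card = p j))
  have hne : cand.Nonempty := by
    have hex : ∀ j, ∃ A, A ∈ S.powerset.filter (fun A => A.card = p j) := by
      intro j
      obtain ⟨A, hA, hAc⟩ := Finset.exists_subset_card_eq (show p j ≤ S.card by rw [hcardS]; exact hpT j)
      exact ⟨A, by simp [Finset.mem_filter, Finset.mem_powerset, hA, hAc]⟩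
    choose f hf using hex
    exact ⟨f, Fintype.mem_piFinset.mpr hf⟩
  -- the load function
  let load : (ι → Finset ℕ) → ℕ → ℝ :=
    fun c u => ∑ j ∈ Finset.univ.filter (fun j => u ∈ c j), s j
  -- pick a potential-minimizing assignment
  obtain ⟨c, hc, hmin⟩ := cand.exists_min_image (fun c => ∑ u ∈ S, (load c u) ^ 2) hne
  have hcmem : ∀ j, c j ⊆ S ∧ (c j).card = p j := by
    intro j
    have := Fintype.mem_piFinset.mp hc j
    simpa [Finset.mem_filter, Finset.mem_powerset] using this
  refine ⟨c, hcmem, ?_⟩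
  have key : ∀ t ∈ S, ∀ t' ∈ S, load c t - load c t' ≤ 1 := by
    intro t ht t' ht'
    by_contra hcon
    push_neg at hcon
    have htt' : t ≠ t' := by rintro rfl; linarith
    -- there is a job covering t but not t'
    have hj0 : ∃ j0, t ∈ c j0 ∧ t' ∉ c j0 := by
      by_contra hno
      push_neg at hno
      have hsub : Finset.univ.filter (fun j => t ∈ c j) ⊆
          Finset.univ.filter (fun j => t' ∈ c j) := by
        intro j hj
        simp only [Finset.mem_filter, Finset.mem_univ, true_and] at hj ⊢
        exact hno j hj
      have hle : load c t ≤ load c t' :=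
        Finset.sum_le_sum_of_subset_of_nonneg hsub (fun j _ _ => (hs0 j).le)
      linarith
    obtain ⟨j0, hj0t, hj0t'⟩ := hj0
    -- move job j0 from slot t to slot t'
    set A : Finset ℕ := insert t' ((c j0).erase t) with hA
    set c' : ι → Finset ℕ := Function.update c j0 A with hc'def
    have ht'A : t' ∉ (c j0).erase t := fun h => hj0t' (Finset.mem_of_mem_erase h)
    have hc'mem : c' ∈ cand := by
      refine Fintype.mem_piFinset.mpr (fun j => ?_)
      by_cases hj : j = j0
      · subst hj
        have hsub : A ⊆ S := by
          intro x hx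
          rcases Finset.mem_insert.mp hx with rfl | hx
          · exact ht'
          · exact (hcmem j).1 (Finset.mem_of_mem_erase hx)
        have hcard : A.card = p j := by
          rw [hA, Finset.card_insert_of_notMem ht'A, Finset.card_erase_of_mem hj0t,
            (hcmem j).2]
          have := hp1 j
          omega
        simp [hc'def, Function.update_self, Finset.mem_filter, Finset.mem_powerset,
          hsub, hcard]
      · simp only [hc'def, Function.update_of_ne hj]
        have := Fintype.mem_piFinset.mp hc j
        exact this
    -- the filter sets of the new assignment
    have hft : Finset.univ.filter (fun j => t ∈ c' j) =
        (Finset.univ.filter (fun j => t ∈ c j)).erase j0 := by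
      ext j
      simp only [Finset.mem_filter, Finset.mem_univ, true_and, Finset.mem_erase]
      by_cases hj : j = j0
      · subst hj
        simp [hc'def, hA, Function.update_self, htt']
      · simp [hc'def, Function.update_of_ne hj, hj]
    have hft' : Finset.univ.filter (fun j => t' ∈ c' j) =
        insert j0 (Finset.univ.filter (fun j => t' ∈ c j)) := by
      ext j
      simp only [Finset.mem_filter, Finset.mem_univ, true_and, Finset.mem_insert]
      by_cases hj : j = j0
      · subst hj
        simp [hc'def, hA, Function.update_self]
      · simp [hc'def, Function.update_of_ne hj, hj]
    have hothers : ∀ u, u ≠ t → u ≠ t' → load c' u = load c u := by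
      intro u hu1 hu2
      have heq : Finset.univ.filter (fun j => u ∈ c' j) =
          Finset.univ.filter (fun j => u ∈ c j) := by
        ext j
        simp only [Finset.mem_filter, Finset.mem_univ, true_and]
        by_cases hj : j = j0
        · subst hj
          simp [hc'def, hA, Function.update_self, hu1, hu2]
        · simp [hc'def, Function.update_of_ne hj]
      simp only [load, heq]
    have hj0mem : j0 ∈ Finset.univ.filter (fun j => t ∈ c j) := by
      simp [Finset.mem_filter, hj0t]
    have hj0nmem : j0 ∉ Finset.univ.filter (fun j => t' ∈ c j) := by
      simp [Finset.mem_filter, hj0t']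
    have hlt : load c' t = load c t - s j0 := by
      simp only [load, hft]
      exact Finset.sum_erase_eq_sub hj0mem
    have hlt' : load c' t' = load c t' + s j0 := by
      simp only [load, hft']
      rw [Finset.sum_insert hj0nmem]
      ring
    -- split the potential sum at t and t'
    have ht'e : t' ∈ S.erase t := Finset.mem_erase.mpr ⟨Ne.symm htt', ht'⟩
    have hsplit : ∀ d : ι → Finset ℕ,
        ∑ u ∈ S, (load d u) ^ 2 =
          (load d t) ^ 2 + ((load d t') ^ 2 +
            ∑ u ∈ (S.erase t).erase t', (load d u) ^ 2) := by
      intro d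
      rw [← Finset.add_sum_erase S _ ht, ← Finset.add_sum_erase (S.erase t) _ ht'e]
    have htail : ∑ u ∈ (S.erase t).erase t', (load c' u) ^ 2 =
        ∑ u ∈ (S.erase t).erase t', (load c u) ^ 2 := by
      refine Finset.sum_congr rfl (fun u hu => ?_)
      have hu1 : u ≠ t := Finset.ne_of_mem_erase (Finset.mem_of_mem_erase hu)
      have hu2 : u ≠ t' := Finset.ne_of_mem_erase hu
      rw [hothers u hu1 hu2]
    have hlt_stat : ∑ u ∈ S, (load c' u) ^ 2 < ∑ u ∈ S, (load c u) ^ 2 := by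
      rw [hsplit c', hsplit c, htail, hlt, hlt']
      nlinarith [hs0 j0, hs1 j0, hcon]
    exact absurd (hmin c' hc'mem) (not_le.mpr hlt_stat)
  intro t ht t' ht'
  have h1 := key t ht t' ht'
  have h2 := key t' ht' t ht
  rw [abs_sub_le_iff]
  exact ⟨h1, h2⟩
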